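/- Let S' ⊆ V be a current partial subset, R ⊆ V a set of remaining candidate points with S' ∩ R = ∅, and let k be an integer with 1 ≤ k ≤ |R|. If v ∈ R satisfies U_min(v) > U_max^k (the k-th largest maximum utility over R), then v belongs to every optimal set S*, i.e., every set S* maximizing f over all T with S' ⊆ T ⊆ S' ∪ R and |T| = |S'| + k contains v. -/

import Mathlib

open Finset

/-- The `k`-th largest element (1-indexed) of a multiset of reals. -/
noncomputable def kthLargest (m : Multiset ℝ) (k : ℕ) : ℝ :=
  (m.sort (· ≤ ·)).getD (Multiset.card m - k) 0

lemma countP_gt_kthLargest (m : Multiset ℝ) (k : ℕ) (hk1 : 1 ≤ k) (hk2 : k ≤ Multiset.card m) :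
    (m.filter (fun x => kthLargest m k < x)).card ≤ k - 1 := by
  set L := m.sort (· ≤ ·) with hL
  have hlen : L.length = Multiset.card m := Multiset.length_sort _
  have hsorted : L.Pairwise (· ≤ ·) := Multiset.pairwise_sort _ _
  have hidx : Multiset.card m - k < L.length := by omega
  set c := kthLargest m k with hc
  have hcval : c = L[Multiset.card m - k] := by
    rw [hc, kthLargest, List.getD_eq_getElem _ _ hidx]
  have hle : ∀ (i : ℕ) (h : i < L.length), i ≤ Multiset.card m - k → L[i] ≤ c := by
    intro i h hi
    rw [hcval]
    rcases lt_or_eq_of_le hi with h' | h'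
    · exact hsorted.rel_get_of_lt (by simpa using h')
    · subst h'; exact le_refl _
  -- the prefix of length n-k+1 consists of elements ≤ c
  have htake : ∀ a ∈ L.take (Multiset.card m - k + 1), a ≤ c := by
    intro a ha
    obtain ⟨i, hi, rfl⟩ := List.mem_iff_getElem.mp ha
    rw [List.getElem_take]
    have hi' : i < Multiset.card m - k + 1 := lt_of_lt_of_le hi (by
      simpa using List.length_take_le _ _)
    exact hle i (by
      have := hi; rw [List.length_take] at this; omega) (by omega)
  have hfilt_take : (L.take (Multiset.card m - k + 1)).filter (fun x => decide (x ≤ c))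
      = L.take (Multiset.card m - k + 1) := List.filter_eq_self.mpr (by
        intro a ha; simpa using htake a ha)
  have hsub : ((L.take (Multiset.card m - k + 1)).filter (fun x => decide (x ≤ c))).Sublist
      (L.filter (fun x => decide (x ≤ c))) := (List.take_sublist _ _).filter _
  have hlen_take : (L.take (Multiset.card m - k + 1)).length = Multiset.card m - k + 1 := by
    rw [List.length_take]; omega
  have hcount : Multiset.card m - k + 1 ≤ (L.filter (fun x => decide (x ≤ c))).length := by
    have := hsub.length_le
    rw [hfilt_take, hlen_take] at this
    exact this
  -- partition: countP (c < ·) = length − countP (≤ c)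
  have hpart : (L.filter (fun x => decide (c < x))).length
      + (L.filter (fun x => decide (x ≤ c))).length = L.length := by
    rw [← List.countP_eq_length_filter, ← List.countP_eq_length_filter,
      List.length_eq_countP_add_countP (fun x => decide (c < x)) (l := L)]
    congr 1
    apply List.countP_congr
    intro a _
    simp [not_lt]
  have hm : m = (L : Multiset ℝ) := (Multiset.sort_eq _ _).symm
  have key : (m.filter (fun x => kthLargest m k < x)).card
      = (L.filter (fun x => decide (c < x))).length := by
    rw [← Multiset.countP_eq_card_filter, ← List.countP_eq_length_filter, ← hc]
    conv_lhs => rw [hm]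
    rw [Multiset.coe_countP]
  rw [key]
  omega

lemma exists_le_kthLargest (m sub : Multiset ℝ) (k : ℕ) (hk1 : 1 ≤ k)
    (hk2 : k ≤ Multiset.card m) (hsub : sub ≤ m) (hcard : Multiset.card sub = k) :
    ∃ x ∈ sub, x ≤ kthLargest m k := by
  by_contra h
  push_neg at h
  have heq : sub.filter (fun x => kthLargest m k < x) = sub :=
    Multiset.filter_eq_self.mpr h
  have h1 : (sub.filter (fun x => kthLargest m k < x)).card
      ≤ (m.filter (fun x => kthLargest m k < x)).card :=
    Multiset.card_le_card (Multiset.filter_le_filter _ hsub)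
  have h2 := countP_gt_kthLargest m k hk1 hk2
  rw [heq, hcard] at h1
  omega

/-- Grow step correctness: if the minimum utility of `v ∈ R` exceeds the `k`-th largest
maximum utility over `R`, then `v` belongs to every optimal set. -/
theorem grow_lemma {V : Type*} [Fintype V] [DecidableEq V]
    (α β : ℝ) (hα : 0 < α) (hβ : 0 ≤ β)
    (u : V → ℝ) (s : V → V → ℝ)
    (hsymm : ∀ v w, s v w = s w v) (hnn : ∀ v w, 0 ≤ s v w)
    (hdiag : ∀ v, s v v = 0)
    (f : Finset V → ℝ)
    (hf : ∀ S : Finset V, f S = α * ∑ v ∈ S, u v - (β / 2) * ∑ v ∈ S, ∑ w ∈ S, s v w)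
    (S' R : Finset V) (hdisj : Disjoint S' R)
    (k : ℕ) (hk1 : 1 ≤ k) (hk2 : k ≤ R.card)
    (Umin Umax : V → ℝ)
    (hUmin : ∀ v, Umin v = u v - (β / α) * ∑ w ∈ S' ∪ R, s v w)
    (hUmax : ∀ v, Umax v = u v - (β / α) * ∑ w ∈ S', s v w)
    (v : V) (hv : v ∈ R)
    (hgrow : Umin v > kthLargest (R.val.map Umax) k) :
    ∀ Sstar : Finset V,
      S' ⊆ Sstar → Sstar ⊆ S' ∪ R → Sstar.card = S'.card + k →
      (∀ T : Finset V, S' ⊆ T → T ⊆ S' ∪ R → T.card = S'.card + k → f T ≤ f Sstar) →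
      v ∈ Sstar := by
  intro Sstar hS1 hS2 hcard hopt
  by_contra hvS
  -- a general formula for inserting a new point
  have hins : ∀ (x : V) (B : Finset V), x ∉ B →
      f (insert x B) = f B + (α * u x - β * ∑ y ∈ B, s x y) := by
    intro x B hx
    rw [hf, hf, Finset.sum_insert hx, Finset.sum_insert hx]
    have h1 : ∑ w ∈ insert x B, s x w = ∑ y ∈ B, s x y := by
      rw [Finset.sum_insert hx, hdiag, zero_add]
    have h2 : ∑ a ∈ B, ∑ w ∈ insert x B, s a w = ∑ a ∈ B, (s a x + ∑ w ∈ B, s a w) := by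
      refine Finset.sum_congr rfl fun a _ => ?_
      rw [Finset.sum_insert hx]
    have h3 : ∑ a ∈ B, s a x = ∑ a ∈ B, s x a :=
      Finset.sum_congr rfl fun a _ => hsymm a x
    rw [h1, h2, Finset.sum_add_distrib, h3]
    ring
  -- extract a swap candidate w from Sstar \ S'
  set D := Sstar \ S' with hD
  have hDR : D ⊆ R := by
    intro x hx
    rw [hD, Finset.mem_sdiff] at hx
    rcases Finset.mem_union.mp (hS2 hx.1) with h | h
    · exact absurd h hx.2
    · exact h
  have hDcard : D.card = k := by
    rw [hD, Finset.card_sdiff_of_subset hS1]; omega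
  obtain ⟨x, hxmem, hxle⟩ := exists_le_kthLargest (R.val.map Umax) (D.val.map Umax) k hk1
    (by simpa using hk2)
    (Multiset.map_le_map (Finset.val_le_iff.mpr hDR))
    (by simpa using hDcard)
  obtain ⟨w, hwD, rfl⟩ := Multiset.mem_map.mp hxmem
  have hwD' : w ∈ D := hwD
  have hwS : w ∈ Sstar := (Finset.mem_sdiff.mp hwD').1
  have hwS' : w ∉ S' := (Finset.mem_sdiff.mp hwD').2
  -- the swap
  set B := Sstar.erase w with hB
  have hwB : w ∉ B := Finset.notMem_erase w Sstar
  have hvB : v ∉ B := fun h => hvS (Finset.mem_of_mem_erase h)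
  have hBS : insert w B = Sstar := Finset.insert_erase hwS
  have hS'B : S' ⊆ B := by
    intro y hy
    exact Finset.mem_erase.mpr ⟨fun h => hwS' (h ▸ hy), hS1 hy⟩
  have hBsub : B ⊆ S' ∪ R := fun y hy => hS2 (Finset.mem_of_mem_erase hy)
  set T := insert v B with hT
  have hTsub1 : S' ⊆ T := hS'B.trans (Finset.subset_insert v B)
  have hTsub2 : T ⊆ S' ∪ R := by
    intro y hy
    rcases Finset.mem_insert.mp hy with rfl | h
    · exact Finset.mem_union_right _ hv
    · exact hBsub h
  have hBcard : B.card = S'.card + k - 1 := by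
    rw [hB, Finset.card_erase_of_mem hwS, hcard]
  have hTcard : T.card = S'.card + k := by
    rw [hT, Finset.card_insert_of_notMem hvB, hBcard]; omega
  have hle := hopt T hTsub1 hTsub2 hTcard
  -- bound f T - f Sstar from below
  have hfT : f T = f B + (α * u v - β * ∑ y ∈ B, s v y) := hins v B hvB
  have hfS : f Sstar = f B + (α * u w - β * ∑ y ∈ B, s w y) := by
    rw [← hBS]; exact hins w B hwB
  have hb1 : ∑ y ∈ B, s v y ≤ ∑ y ∈ S' ∪ R, s v y :=
    Finset.sum_le_sum_of_subset_of_nonneg hBsub (fun y _ _ => hnn v y)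
  have hb2 : ∑ y ∈ S', s w y ≤ ∑ y ∈ B, s w y :=
    Finset.sum_le_sum_of_subset_of_nonneg hS'B (fun y _ _ => hnn w y)
  have hαne : α ≠ 0 := ne_of_gt hα
  have hmin : α * Umin v = α * u v - β * ∑ y ∈ S' ∪ R, s v y := by
    rw [hUmin v]; field_simp
  have hmax : α * Umax w = α * u w - β * ∑ y ∈ S', s w y := by
    rw [hUmax w]; field_simp
  have hgt : Umax w < Umin v := lt_of_le_of_lt hxle hgrow
  have h1 : α * Umax w < α * Umin v := by
    exact (mul_lt_mul_iff_right₀ hα).mpr hgt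
  nlinarith [mul_le_mul_of_nonneg_left hb1 hβ, mul_le_mul_of_nonneg_left hb2 hβ]
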